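/- Let Q be an integer with ⌈1+n/2⌉ ≤ Q ≤ n, and suppose z ∈ X satisfies m_{⌈1+n/2⌉}(z) ≤ 2·m_Q(w) for every point w ∈ X (i.e., z is Q well positioned). Then for every u ∈ X, dist(z,u) ≤ 3·m_Q(u). -/
import Mathlib


open Finset

/-- The `Q`-quantile distance of `u` to the finite point set `V`: the smallest radius `r`
such that the closed ball of radius `r` around `u` contains at least `Q` points of `V`. -/
noncomputable def medDist {X : Type*} [MetricSpace X] (V : Finset X) (Q : ℕ) (u : X) : ℝ :=
  sInf {r : ℝ | Q ≤ (V.filter fun v => dist u v ≤ r).card}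

lemma medDist_mem {X : Type*} [MetricSpace X] (V : Finset X) (Q : ℕ)
    (hQ1 : 1 ≤ Q) (hQn : Q ≤ V.card) (u : X) :
    Q ≤ (V.filter fun v => dist u v ≤ medDist V Q u).card := by
  have hVne : V.Nonempty := Finset.card_pos.mp (lt_of_lt_of_le hQ1 hQn)
  set S : Set ℝ := {r : ℝ | Q ≤ (V.filter fun v => dist u v ≤ r).card} with hS
  have hSne : S.Nonempty := by
    refine ⟨V.sup' hVne (fun v => dist u v), ?_⟩
    show Q ≤ (V.filter fun v => dist u v ≤ V.sup' hVne (fun v => dist u v)).card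
    have heq : V.filter (fun v => dist u v ≤ V.sup' hVne (fun v => dist u v)) = V := by
      apply Finset.filter_true_of_mem
      intro v hv
      exact Finset.le_sup' _ hv
    rw [heq]; exact hQn
  have hSbdd : BddBelow S := by
    refine ⟨0, fun r hr => ?_⟩
    have : (V.filter fun v => dist u v ≤ r).Nonempty := by
      apply Finset.card_pos.mp
      exact lt_of_lt_of_le hQ1 hr
    obtain ⟨v, hv⟩ := this
    have := (Finset.mem_filter.mp hv).2
    exact le_trans dist_nonneg this
  set r0 := medDist V Q u with hr0
  by_cases hT : (V.filter fun v => r0 < dist u v).Nonempty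
  · set ε := (V.filter fun v => r0 < dist u v).inf' hT (fun v => dist u v) - r0 with hε
    have hεpos : 0 < ε := by
      have h1 : r0 < (V.filter fun v => r0 < dist u v).inf' hT (fun v => dist u v) := by
        rw [Finset.lt_inf'_iff]
        intro v hv
        exact (Finset.mem_filter.mp hv).2
      simp only [hε]; linarith
    have hlt : sInf S < r0 + ε := by
      have : medDist V Q u = sInf S := rfl
      rw [hr0, this]; linarith
    obtain ⟨s, hsS, hs⟩ := exists_lt_of_csInf_lt hSne hlt
    have hsub : (V.filter fun v => dist u v ≤ s) ⊆ (V.filter fun v => dist u v ≤ r0) := by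
      intro v hv
      rw [Finset.mem_filter] at hv ⊢
      refine ⟨hv.1, ?_⟩
      by_contra h
      push_neg at h
      have hvT : v ∈ V.filter fun v => r0 < dist u v := Finset.mem_filter.mpr ⟨hv.1, h⟩
      have h2 := Finset.inf'_le (fun v => dist u v) hvT
      have : r0 + ε ≤ dist u v := by simp only [hε]; linarith
      linarith [hv.2]
    calc Q ≤ (V.filter fun v => dist u v ≤ s).card := hsS
      _ ≤ (V.filter fun v => dist u v ≤ r0).card := Finset.card_le_card hsub
  · have : V.filter (fun v => dist u v ≤ r0) = V := by
      apply Finset.filter_true_of_mem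
      intro v hv
      by_contra h
      push_neg at h
      exact hT ⟨v, Finset.mem_filter.mpr ⟨hv, h⟩⟩
    rw [this]; exact hQn

/-- Let `⌈1+n/2⌉ ≤ Q ≤ n` and suppose `z` is `Q` well positioned, i.e.
`m_{⌈1+n/2⌉}(z) ≤ 2·m_Q(w)` for every point `w` of the space. Then for every point `u`,
`dist z u ≤ 3·m_Q(u)`. -/
theorem stmt16 {X : Type*} [MetricSpace X] (V : Finset X) (Q : ℕ)
    (hQlo : (V.card + 1) / 2 + 1 ≤ Q) (hQhi : Q ≤ V.card)
    (z : X) (hz : ∀ w : X, medDist V ((V.card + 1) / 2 + 1) z ≤ 2 * medDist V Q w) :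
    ∀ u : X, dist z u ≤ 3 * medDist V Q u := by
  intro u
  classical
  set H := (V.card + 1) / 2 + 1 with hH
  have hA : Q ≤ (V.filter fun v => dist u v ≤ medDist V Q u).card :=
    medDist_mem V Q (by omega) hQhi u
  have hB : H ≤ (V.filter fun v => dist z v ≤ medDist V H z).card :=
    medDist_mem V H (by omega) (by omega) z
  set A := V.filter fun v => dist u v ≤ medDist V Q u
  set B := V.filter fun v => dist z v ≤ medDist V H z
  have hinter : (A ∩ B).Nonempty := by
    rw [← Finset.card_pos]
    have h1 : (A ∪ B).card + (A ∩ B).card = A.card + B.card :=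
      Finset.card_union_add_card_inter A B
    have h2 : (A ∪ B).card ≤ V.card := by
      apply Finset.card_le_card
      intro v hv
      rcases Finset.mem_union.mp hv with h | h
      · exact (Finset.mem_filter.mp h).1
      · exact (Finset.mem_filter.mp h).1
    omega
  obtain ⟨v, hv⟩ := hinter
  have hvA := Finset.mem_filter.mp (Finset.mem_inter.mp hv).1
  have hvB := Finset.mem_filter.mp (Finset.mem_inter.mp hv).2
  have hzu : medDist V H z ≤ 2 * medDist V Q u := hz u
  calc dist z u ≤ dist z v + dist v u := dist_triangle z v u
    _ = dist z v + dist u v := by rw [dist_comm v u]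
    _ ≤ 2 * medDist V Q u + medDist V Q u := by
        have := hvA.2; have := hvB.2; linarith
    _ = 3 * medDist V Q u := by ring
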